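/- If G is a connected finite simple graph of order n with a vertex of degree n − 1, then χ_md(G) = χ(G). -/
import Mathlib


open SimpleGraph

/-- A majority dominator coloring: a proper coloring such that every vertex `v`
dominates at least half of some (nonempty) color class, i.e. there is a color class `C`
with `|C| ≤ 2 * |C ∩ N[v]|`. -/
def SimpleGraph.IsMajorityDominatorColoring {V : Type*} (G : SimpleGraph V) {k : ℕ}
    (c : V → Fin k) : Prop :=
  (∀ u v, G.Adj u v → c u ≠ c v) ∧
  ∀ v : V, ∃ i : Fin k,
    {u | c u = i}.Nonempty ∧
    {u | c u = i}.ncard ≤ 2 * {u | c u = i ∧ (u = v ∨ G.Adj v u)}.ncard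

/-- The majority dominator chromatic number. -/
noncomputable def SimpleGraph.majorityDominatorChromaticNumber {V : Type*}
    (G : SimpleGraph V) : ℕ :=
  sInf {k | ∃ c : V → Fin k, G.IsMajorityDominatorColoring c}

theorem md_eq_chromatic_of_degree_eq_card_sub_one {V : Type*} [Fintype V]
    (G : SimpleGraph V) [DecidableRel G.Adj] (hG : G.Connected)
    (v : V) (hv : G.degree v = Fintype.card V - 1) :
    (G.majorityDominatorChromaticNumber : ℕ∞) = G.chromaticNumber := by
  classical
  -- v is universal
  have hadj : ∀ u : V, u ≠ v → G.Adj v u := by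
    intro u hu
    have hsub : G.neighborFinset v ⊆ Finset.univ.erase v := by
      intro w hw
      simp only [Finset.mem_erase, Finset.mem_univ, and_true]
      exact fun h => G.irrefl (h ▸ (mem_neighborFinset G v w).mp hw)
    have hcard : (Finset.univ.erase v).card = Fintype.card V - 1 := by
      rw [Finset.card_erase_of_mem (Finset.mem_univ v), Finset.card_univ]
    have heq : G.neighborFinset v = Finset.univ.erase v :=
      Finset.eq_of_subset_of_card_le hsub (by rw [hcard, ← hv]; rfl)
    have : u ∈ G.neighborFinset v := by
      rw [heq]; simp [hu]
    exact (mem_neighborFinset G v u).mp this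
  set k := ENat.toNat G.chromaticNumber with hk
  have hcol : G.Colorable k := G.colorable_chromaticNumber_of_fintype
  have hχ : G.chromaticNumber = (k : ℕ∞) := by
    have : G.chromaticNumber ≠ ⊤ :=
      (G.colorable_of_fintype.chromaticNumber_le.trans_lt (by simp)).ne
    exact (ENat.coe_toNat this).symm
  obtain ⟨C⟩ := hcol
  -- the coloring C is a majority dominator coloring
  have hmd : G.IsMajorityDominatorColoring (fun u => C u) := by
    refine ⟨fun a b hab => C.valid hab, fun u => ?_⟩
    refine ⟨C v, ⟨v, rfl⟩, ?_⟩
    have hclass : {w | C w = C v} = {v} := by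
      ext w
      simp only [Set.mem_setOf_eq, Set.mem_singleton_iff]
      constructor
      · intro hw
        by_contra hwv
        exact C.valid (hadj w hwv) hw.symm
      · intro hw; rw [hw]
    have hclass2 : {w | C w = C v ∧ (w = u ∨ G.Adj u w)} = {v} := by
      ext w
      simp only [Set.mem_setOf_eq, Set.mem_singleton_iff]
      constructor
      · rintro ⟨hw, -⟩
        by_contra hwv
        exact C.valid (hadj w hwv) hw.symm
      · intro hw
        refine ⟨hw ▸ rfl, ?_⟩
        rcases eq_or_ne u v with h | h
        · exact Or.inl (hw.trans h.symm)
        · exact Or.inr (hw ▸ (hadj u h).symm)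
    rw [hclass, hclass2, Set.ncard_singleton]
    omega
  have hne : {m | ∃ c : V → Fin m, G.IsMajorityDominatorColoring c}.Nonempty := ⟨k, _, hmd⟩
  have hmem := Nat.sInf_mem hne
  obtain ⟨c, hc, -⟩ := hmem
  have h1 : G.chromaticNumber ≤ (G.majorityDominatorChromaticNumber : ℕ∞) := by
    rw [chromaticNumber_le_iff_colorable]
    exact ⟨⟨c, fun hab => hc _ _ hab⟩⟩
  have h2 : G.majorityDominatorChromaticNumber ≤ k := Nat.sInf_le ⟨_, hmd⟩
  rw [hχ]
  exact le_antisymm (by exact_mod_cast h2) (hχ ▸ h1)
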